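/- Let 𝓜 ⊆ ℂ^4 be defined by w_1 − conj(w_1) = 2i z conj(z), w_2 − conj(w_2) = 2i z conj(z)(z + conj(z)), w_3 − conj(w_3) = 2i z conj(z)(z² + (3/2) z conj(z) + conj(z)²), with weights [z] = 1, [w_1] = 2, [w_2] = 3, [w_3] = 4. The space g_{−1} of weighted homogeneous polynomial infinitesimal CR-automorphisms of 𝓜 of weight −1 (i.e. those with Z, W^1, W^2, W^3 weighted homogeneous of weights 0, 1, 2, 3 respectively) is a 2-dimensional real vector space spanned by the tuples X_1 = (1, 2iz, 2iz² + 4w_1, 2iz³ + 6w_2) and X_2 = (i, 2z, 2z², 2z³). -/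

import Mathlib

open MvPolynomial Complex

noncomputable section

/-- Points of ℂ⁴ in coordinates (z, w₁, w₂, w₃). -/
abbrev Pt := Fin 4 → ℂ

/-- Polynomials in ℂ[z, w₁, w₂, w₃] : variable 0 is z, variables 1, 2, 3 are w₁, w₂, w₃. -/
abbrev CPoly := MvPolynomial (Fin 4) ℂ

/-- Tuples (Z, W¹, W², W³), identified with the vector field Z ∂_z + Σ_l W^l ∂_{w_l}. -/
abbrev Tup := Fin 4 → CPoly

/-- The CR-manifold 𝓜 ⊆ ℂ⁴, defined by w₁ − w̄₁ = 2i z z̄, w₂ − w̄₂ = 2i z z̄ (z + z̄),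
w₃ − w̄₃ = 2i z z̄ (z² + (3/2) z z̄ + z̄²). -/
def Mcal : Set Pt :=
  {p | p 1 - starRingEnd ℂ (p 1) = 2 * I * p 0 * starRingEnd ℂ (p 0) ∧
       p 2 - starRingEnd ℂ (p 2) =
         2 * I * p 0 * starRingEnd ℂ (p 0) * (p 0 + starRingEnd ℂ (p 0)) ∧
       p 3 - starRingEnd ℂ (p 3) =
         2 * I * p 0 * starRingEnd ℂ (p 0) *
           ((p 0) ^ 2 + (3 / 2 : ℂ) * p 0 * starRingEnd ℂ (p 0) +
             (starRingEnd ℂ (p 0)) ^ 2)}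

/-- (Z, W¹, W², W³) is a (polynomial) infinitesimal CR-automorphism of 𝓜 : the three
tangency identities hold at every point of 𝓜. -/
def IsCRAut (F : Tup) : Prop :=
  ∀ p ∈ Mcal,
    (eval p (F 1) - starRingEnd ℂ (eval p (F 1))
      - 2 * I * starRingEnd ℂ (p 0) * eval p (F 0)
      - 2 * I * p 0 * starRingEnd ℂ (eval p (F 0)) = 0) ∧
    (eval p (F 2) - starRingEnd ℂ (eval p (F 2))
      - 4 * I * p 0 * starRingEnd ℂ (p 0) * eval p (F 0)
      - 2 * I * (starRingEnd ℂ (p 0)) ^ 2 * eval p (F 0)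
      - 2 * I * (p 0) ^ 2 * starRingEnd ℂ (eval p (F 0))
      - 4 * I * p 0 * starRingEnd ℂ (p 0) * starRingEnd ℂ (eval p (F 0)) = 0) ∧
    (eval p (F 3) - starRingEnd ℂ (eval p (F 3))
      - 6 * I * (p 0) ^ 2 * starRingEnd ℂ (p 0) * eval p (F 0)
      - 6 * I * p 0 * (starRingEnd ℂ (p 0)) ^ 2 * eval p (F 0)
      - 2 * I * (starRingEnd ℂ (p 0)) ^ 3 * eval p (F 0)
      - 2 * I * (p 0) ^ 3 * starRingEnd ℂ (eval p (F 0))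
      - 6 * I * (p 0) ^ 2 * starRingEnd ℂ (p 0) * starRingEnd ℂ (eval p (F 0))
      - 6 * I * p 0 * (starRingEnd ℂ (p 0)) ^ 2 * starRingEnd ℂ (eval p (F 0)) = 0)

/-- The weights [z] = 1, [w₁] = 2, [w₂] = 3, [w₃] = 4. -/
def wt : Fin 4 → ℕ := ![1, 2, 3, 4]

/-- X₁ = (1, 2iz, 2iz² + 4w₁, 2iz³ + 6w₂). -/
def X₁ : Tup :=
  ![1, C (2 * I) * X 0, C (2 * I) * X 0 ^ 2 + C 4 * X 1, C (2 * I) * X 0 ^ 3 + C 6 * X 2]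

/-- X₂ = (i, 2z, 2z², 2z³). -/
def X₂ : Tup := ![C I, C 2 * X 0, C 2 * X 0 ^ 2, C 2 * X 0 ^ 3]


/- ### Auxiliary lemmas -/

lemma weight_eq' (d : Fin 4 →₀ ℕ) : Finsupp.weight wt d = d 0 * 1 + d 1 * 2 + d 2 * 3 + d 3 * 4 := by
  rw [Finsupp.weight_apply, Finsupp.sum_fintype]
  · simp [Fin.sum_univ_four, wt]
  · intro i; simp

lemma deg0' (d : Fin 4 →₀ ℕ) (h : Finsupp.weight wt d = 0) : d = 0 := by
  rw [weight_eq'] at h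
  ext i
  fin_cases i <;> simp <;> omega

lemma deg1' (d : Fin 4 →₀ ℕ) (h : Finsupp.weight wt d = 1) : d = Finsupp.single 0 1 := by
  rw [weight_eq'] at h
  ext i
  fin_cases i <;> simp [Finsupp.single_apply] <;> omega

lemma deg2' (d : Fin 4 →₀ ℕ) (h : Finsupp.weight wt d = 2) :
    d = Finsupp.single 0 2 ∨ d = Finsupp.single 1 1 := by
  rw [weight_eq'] at h
  have : (d 0 = 2 ∧ d 1 = 0 ∧ d 2 = 0 ∧ d 3 = 0) ∨
      (d 0 = 0 ∧ d 1 = 1 ∧ d 2 = 0 ∧ d 3 = 0) := by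
    have h3 : d 3 = 0 := by omega
    have h2 : d 2 = 0 := by omega
    omega
  rcases this with ⟨h0, h1, h2, h3⟩ | ⟨h0, h1, h2, h3⟩
  · left; ext i; fin_cases i <;> simp_all [Finsupp.single_apply]
  · right; ext i; fin_cases i <;> simp_all [Finsupp.single_apply]

lemma deg3' (d : Fin 4 →₀ ℕ) (h : Finsupp.weight wt d = 3) :
    d = Finsupp.single 0 3 ∨ d = Finsupp.single 0 1 + Finsupp.single 1 1 ∨
      d = Finsupp.single 2 1 := by
  rw [weight_eq'] at h
  have : (d 0 = 3 ∧ d 1 = 0 ∧ d 2 = 0 ∧ d 3 = 0) ∨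
      (d 0 = 1 ∧ d 1 = 1 ∧ d 2 = 0 ∧ d 3 = 0) ∨
      (d 0 = 0 ∧ d 1 = 0 ∧ d 2 = 1 ∧ d 3 = 0) := by
    have h3 : d 3 = 0 := by omega
    omega
  rcases this with ⟨h0, h1, h2, h3⟩ | ⟨h0, h1, h2, h3⟩ | ⟨h0, h1, h2, h3⟩
  · left; ext i; fin_cases i <;> simp_all [Finsupp.single_apply]
  · right; left; ext i; fin_cases i <;> simp_all [Finsupp.single_apply]
  · right; right; ext i; fin_cases i <;> simp_all [Finsupp.single_apply]

lemma shape0' (φ : CPoly) (h : φ.IsWeightedHomogeneous wt 0) : φ = C (coeff 0 φ) := by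
  ext d
  rcases eq_or_ne d 0 with rfl | hd
  · simp
  · rw [coeff_C, if_neg (fun hc => hd hc.symm)]
    by_contra hc
    exact hd (deg0' d (h hc))

lemma shape1' (φ : CPoly) (h : φ.IsWeightedHomogeneous wt 1) :
    φ = C (coeff (Finsupp.single 0 1) φ) * X 0 := by
  ext d
  rcases eq_or_ne d (Finsupp.single 0 1) with rfl | hd
  · simp [coeff_C_mul, coeff_X']
  · rw [coeff_C_mul, coeff_X', if_neg (fun hc => hd hc.symm), mul_zero]
    by_contra hc
    exact hd (deg1' d (h hc))

lemma shape2' (φ : CPoly) (h : φ.IsWeightedHomogeneous wt 2) :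
    φ = C (coeff (Finsupp.single 0 2) φ) * X 0 ^ 2
      + C (coeff (Finsupp.single 1 1) φ) * X 1 := by
  have hne : (Finsupp.single 0 2 : Fin 4 →₀ ℕ) ≠ Finsupp.single 1 1 := by
    intro hc
    have := congrArg (fun f => f 0) hc
    simp [Finsupp.single_apply] at this
  ext d
  rcases eq_or_ne d (Finsupp.single 0 2) with rfl | hd
  · simp [coeff_C_mul, coeff_X', coeff_X_pow, hne.symm]
  rcases eq_or_ne d (Finsupp.single 1 1) with rfl | hd'
  · simp [coeff_C_mul, coeff_X', coeff_X_pow, hne]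
  · rw [coeff_add, coeff_C_mul, coeff_C_mul, coeff_X_pow, coeff_X',
      if_neg (fun hc => hd hc.symm), if_neg (fun hc => hd' hc.symm)]
    simp only [mul_zero, add_zero]
    by_contra hc
    rcases deg2' d (h hc) with h1 | h1
    exacts [hd h1, hd' h1]

lemma X0X1' : (X 0 * X 1 : CPoly) = monomial (Finsupp.single 0 1 + Finsupp.single 1 1) 1 := by
  rw [X, X, monomial_mul, one_mul]

lemma shape3' (φ : CPoly) (h : φ.IsWeightedHomogeneous wt 3) :
    φ = C (coeff (Finsupp.single 0 3) φ) * X 0 ^ 3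
      + C (coeff (Finsupp.single 0 1 + Finsupp.single 1 1) φ) * (X 0 * X 1)
      + C (coeff (Finsupp.single 2 1) φ) * X 2 := by
  set m1 : Fin 4 →₀ ℕ := Finsupp.single 0 3 with hm1
  set m2 : Fin 4 →₀ ℕ := Finsupp.single 0 1 + Finsupp.single 1 1 with hm2
  set m3 : Fin 4 →₀ ℕ := Finsupp.single 2 1 with hm3
  have e12 : m1 ≠ m2 := by
    intro hc; have := congrArg (fun f => f 0) hc; simp [hm1, hm2, Finsupp.single_apply] at this
  have e13 : m1 ≠ m3 := by
    intro hc; have := congrArg (fun f => f 0) hc; simp [hm1, hm3, Finsupp.single_apply] at this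
  have e23 : m2 ≠ m3 := by
    intro hc; have := congrArg (fun f => f 0) hc; simp [hm2, hm3, Finsupp.single_apply] at this
  ext d
  rw [coeff_add, coeff_add, coeff_C_mul, coeff_C_mul, coeff_C_mul, coeff_X_pow, X0X1',
    coeff_monomial, coeff_X']
  rcases eq_or_ne d m1 with rfl | hd1
  · rw [if_pos rfl, if_neg (fun hc => e12 hc.symm), if_neg (fun hc => e13 hc.symm)]; ring
  rcases eq_or_ne d m2 with rfl | hd2
  · rw [if_pos rfl, if_neg (fun hc => e12 hc), if_neg (fun hc => e23 hc.symm)]; ring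
  rcases eq_or_ne d m3 with rfl | hd3
  · rw [if_pos rfl, if_neg (fun hc => e13 hc), if_neg (fun hc => e23 hc)]; ring
  · rw [if_neg (fun hc => hd1 hc.symm), if_neg (fun hc => hd2 hc.symm),
      if_neg (fun hc => hd3 hc.symm)]
    simp only [mul_zero, add_zero, zero_add]
    by_contra hc
    rcases deg3' d (h hc) with h1 | h1 | h1
    exacts [hd1 h1, hd2 h1, hd3 h1]

lemma hom_Cmul' (r : ℂ) (φ : CPoly) {n : ℕ} (h : φ.IsWeightedHomogeneous wt n) :
    (C r * φ).IsWeightedHomogeneous wt n := by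
  have := (isWeightedHomogeneous_C wt r).mul h
  rwa [zero_add] at this

lemma hom_smul' (r : ℂ) (φ : CPoly) {n : ℕ} (h : φ.IsWeightedHomogeneous wt n) :
    (r • φ).IsWeightedHomogeneous wt n := by
  rw [smul_eq_C_mul]; exact hom_Cmul' r φ h

lemma homX0' : (X 0 : CPoly).IsWeightedHomogeneous wt 1 := by
  have := isWeightedHomogeneous_X ℂ wt (0 : Fin 4)
  simpa [wt] using this

lemma homX1' : (X 1 : CPoly).IsWeightedHomogeneous wt 2 := by
  have := isWeightedHomogeneous_X ℂ wt (1 : Fin 4)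
  simpa [wt] using this

lemma homX2' : (X 2 : CPoly).IsWeightedHomogeneous wt 3 := by
  have := isWeightedHomogeneous_X ℂ wt (2 : Fin 4)
  simpa [wt] using this

lemma homX0sq' : ((X 0 : CPoly) ^ 2).IsWeightedHomogeneous wt 2 := by
  have := homX0'.mul homX0'
  rw [sq]; exact this

lemma homX0cube' : ((X 0 : CPoly) ^ 3).IsWeightedHomogeneous wt 3 := by
  have := (homX0'.mul homX0').mul homX0'
  rw [pow_succ, sq]; exact this

lemma crG' (a b : ℝ) : IsCRAut ((a:ℂ) • X₁ + (b:ℂ) • X₂) := by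
  intro p hp
  obtain ⟨h1, h2, h3⟩ := hp
  simp only [Pi.add_apply, Pi.smul_apply, X₁, X₂, Matrix.cons_val_zero, Matrix.cons_val_one,
    Matrix.head_cons, Matrix.cons_val_two, Matrix.tail_cons, Matrix.cons_val_three,
    smul_eq_C_mul, map_add, map_mul, map_pow, map_one, map_ofNat, eval_add, eval_mul, eval_pow,
    eval_C, eval_X, conj_I, Complex.conj_ofReal]
  refine ⟨?_, ?_, ?_⟩
  · linear_combination (2*(b:ℂ)*(p 0 - starRingEnd ℂ (p 0))) * Complex.I_sq
  · linear_combination (4 * (a:ℂ)) * h1 +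
      (2*(b:ℂ)*((p 0)^2 - (starRingEnd ℂ (p 0))^2)) * Complex.I_sq
  · linear_combination (6 * (a:ℂ)) * h2 +
      (2*(b:ℂ)*((p 0)^3 - (starRingEnd ℂ (p 0))^3)) * Complex.I_sq

lemma mem1' : (![1, I, 2*I, (7/2)*I] : Pt) ∈ Mcal := by
  refine ⟨?_, ?_, ?_⟩ <;> simp [Complex.ext_iff, map_ofNat, map_div₀, pow_succ] <;> norm_num

lemma mem2' : (![I, I, 0, -(1/2)*I] : Pt) ∈ Mcal := by
  refine ⟨?_, ?_, ?_⟩ <;> simp [Complex.ext_iff, map_ofNat, map_div₀, pow_succ] <;> norm_num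

lemma mem3' : (![0, 1, 0, 0] : Pt) ∈ Mcal := by
  refine ⟨?_, ?_, ?_⟩ <;> simp [Complex.ext_iff, map_ofNat, map_div₀, pow_succ] <;> norm_num

lemma mem4' : (![1+I, 2*I, 4*I, 6*I] : Pt) ∈ Mcal := by
  refine ⟨?_, ?_, ?_⟩ <;> simp [Complex.ext_iff, map_ofNat, map_div₀, pow_succ] <;> norm_num

lemma mem5' : (![0, 0, 1, 0] : Pt) ∈ Mcal := by
  refine ⟨?_, ?_, ?_⟩ <;> simp [Complex.ext_iff, map_ofNat, map_div₀, pow_succ] <;> norm_num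

lemma mem6' : (![1, 1+I, 2*I, (7/2)*I] : Pt) ∈ Mcal := by
  refine ⟨?_, ?_, ?_⟩ <;> simp [Complex.ext_iff, map_ofNat, map_div₀, pow_succ] <;> norm_num

lemma mem7' : (![I, 1+I, 0, -(1/2)*I] : Pt) ∈ Mcal := by
  refine ⟨?_, ?_, ?_⟩ <;> simp [Complex.ext_iff, map_ofNat, map_div₀, pow_succ] <;> norm_num

/-- the space g₋₁ of weighted homogeneous polynomial infinitesimal
CR-automorphisms of 𝓜 of weight −1, i.e. with Z, W¹, W², W³ weighted homogeneous of
weights 0, 1, 2, 3, is the 2-dimensional real vector space spanned by X₁ and X₂. -/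
theorem stmt16 :
    -- X₁ and X₂ are linearly independent over ℝ :
    (∀ a b : ℝ, (a : ℂ) • X₁ + (b : ℂ) • X₂ = 0 → a = 0 ∧ b = 0) ∧
    -- and g₋₁ is exactly their real span :
    (∀ F : Tup,
      (IsCRAut F ∧
        (F 0).IsWeightedHomogeneous wt 0 ∧
        (F 1).IsWeightedHomogeneous wt 1 ∧
        (F 2).IsWeightedHomogeneous wt 2 ∧
        (F 3).IsWeightedHomogeneous wt 3)
      ↔ ∃ a b : ℝ, F = (a : ℂ) • X₁ + (b : ℂ) • X₂) := by
  constructor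
  · intro a b h
    have h0 := congrFun h 0
    simp only [Pi.add_apply, Pi.smul_apply, X₁, X₂, Matrix.cons_val_zero, Pi.zero_apply,
      smul_eq_C_mul, mul_one, ← C_mul, ← C_add] at h0
    rw [MvPolynomial.C_eq_zero] at h0
    have hre := congrArg Complex.re h0
    have him := congrArg Complex.im h0
    simp at hre him
    exact ⟨hre, him⟩
  · intro F
    constructor
    · rintro ⟨hcr, h0, h1, h2, h3⟩
      set cc := coeff 0 (F 0) with hcc0
      set al := coeff (Finsupp.single 0 1) (F 1) with hal0
      set be := coeff (Finsupp.single 0 2) (F 2) with hbe0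
      set ga := coeff (Finsupp.single 1 1) (F 2) with hga0
      set de := coeff (Finsupp.single 0 3) (F 3) with hde0
      set ep := coeff (Finsupp.single 0 1 + Finsupp.single 1 1) (F 3) with hep0
      set ze := coeff (Finsupp.single 2 1) (F 3) with hze0
      have hF0 := shape0' _ h0
      have hF1 := shape1' _ h1
      have hF2 := shape2' _ h2
      have hF3 := shape3' _ h3
      obtain ⟨e11, e21, e31⟩ := hcr _ mem1'
      obtain ⟨e12, e22, e32⟩ := hcr _ mem2'
      obtain ⟨-, e23, -⟩ := hcr _ mem3'
      obtain ⟨-, e24, e34⟩ := hcr _ mem4'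
      obtain ⟨-, -, e35⟩ := hcr _ mem5'
      obtain ⟨-, -, e36⟩ := hcr _ mem6'
      obtain ⟨-, -, e37⟩ := hcr _ mem7'
      rw [hF0, hF1] at e11 e12
      rw [hF0, hF2] at e21 e22 e23 e24
      rw [hF0, hF3] at e31 e32 e34 e35 e36 e37
      simp only [map_add, map_mul, map_pow, map_one, map_zero, map_ofNat, eval_add, eval_mul,
        eval_pow, eval_C, eval_X, conj_I, Matrix.cons_val_zero, Matrix.cons_val_one, Matrix.head_cons,
        Matrix.cons_val_two, Matrix.tail_cons, Matrix.cons_val_three] at e11 e12 e21 e22 e23 e24 e31 e32 e34 e35 e36 e37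
      have hA : al = 2 * I * (starRingEnd ℂ) cc := by
        linear_combination ((1/2)) * e11 + ((-1/2)*Complex.I) * e12 + (((1/2)) * al +
          ((1/2)) * (starRingEnd ℂ) al + ((1)*Complex.I) * cc +
          ((-1)*Complex.I) * (starRingEnd ℂ) cc) * Complex.I_sq
      have hB : be = 2 * I * (starRingEnd ℂ) cc := by
        linear_combination ((1/4) + (1/4)*Complex.I) * e21 + ((-1/4) + (1/4)*Complex.I) * e22 +
          ((-1/4)*Complex.I) * e24 + (((3/4)) * be + ((1/4)) * (starRingEnd ℂ) be +
          ((3/2)*Complex.I) * cc + ((-1/2)*Complex.I) * (starRingEnd ℂ) cc) * Complex.I_sq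
      have hG : ga = 2 * cc + 2 * (starRingEnd ℂ) cc := by
        linear_combination ((1/2)) * e23 + ((-1/4)*Complex.I) * e21 + ((-1/4)*Complex.I) * e22 +
          (((1/4)*Complex.I) * be + ((-1/4)*Complex.I) * (starRingEnd ℂ) be + ((1/2)) * ga +
          ((1/2)) * (starRingEnd ℂ) ga + ((-2) + (1/2)*Complex.I^2) * cc +
          ((-2) + (1/2)*Complex.I^2) * (starRingEnd ℂ) cc) * Complex.I_sq
      have hD : de = 2 * I * (starRingEnd ℂ) cc := by
        linear_combination ((3/4) + (-1/2)*Complex.I) * e31 + ((-1/2) + (1/2)*Complex.I) * e36 +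
          ((-1/4) + (1/2)*Complex.I) * e32 + ((-1/8)) * e34 +
          (((7/8) + (3/8)*Complex.I + (-1/2)*Complex.I^2) * de +
          ((1/8) + (3/8)*Complex.I + (-1/2)*Complex.I^2) * (starRingEnd ℂ) de +
          ((1/2) + (-1/2)*Complex.I) * ep + ((-1/2) + (1/2)*Complex.I) * (starRingEnd ℂ) ep +
          ((7/4)*Complex.I + (3/4)*Complex.I^2 + (-1)*Complex.I^3) * cc +
          ((-1/4)*Complex.I + (-3/4)*Complex.I^2 + (1)*Complex.I^3) * (starRingEnd ℂ) cc) *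
          Complex.I_sq
      have hE : ep = 0 := by
        linear_combination ((-1/2)) * e31 + ((1/2)) * e36 + ((1/2)*Complex.I) * e32 +
          ((-1/2)*Complex.I) * e37 +
          (((1/2)) * ep + ((1/2)) * (starRingEnd ℂ) ep) * Complex.I_sq
      have hZ : ze = 3 * cc + 3 * (starRingEnd ℂ) cc := by
        linear_combination ((1/2)) * e35 + ((1/8)*Complex.I) * e31 + ((-1/4)*Complex.I) * e36 +
          ((-3/8)*Complex.I) * e32 + ((1/4)*Complex.I) * e37 + ((-1/16)*Complex.I) * e34 +
          (((3/16)*Complex.I + (3/16)*Complex.I^2) * de +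
          ((-3/16)*Complex.I + (3/16)*Complex.I^2) * (starRingEnd ℂ) de +
          ((1/4)*Complex.I) * ep + ((-1/4)*Complex.I) * (starRingEnd ℂ) ep + ((1/2)) * ze +
          ((1/2)) * (starRingEnd ℂ) ze + ((-3) + (3/8)*Complex.I^2 + (3/8)*Complex.I^3) * cc +
          ((-3) + (3/8)*Complex.I^2 + (-3/8)*Complex.I^3) * (starRingEnd ℂ) cc) * Complex.I_sq
      have hccd : cc = (cc.re : ℂ) + (cc.im : ℂ) * I := (Complex.re_add_im cc).symm
      have hconj : (starRingEnd ℂ) cc = (cc.re : ℂ) - (cc.im : ℂ) * I := by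
        conv_lhs => rw [← Complex.re_add_im cc]
        rw [map_add, map_mul, Complex.conj_ofReal, Complex.conj_ofReal, conj_I]
        ring
      have hA' : al = (cc.re : ℂ) * (2 * I) + (cc.im : ℂ) * 2 := by
        linear_combination hA + (2*I) * hconj + (-2*(cc.im:ℂ)) * Complex.I_sq
      have hB' : be = (cc.re : ℂ) * (2 * I) + (cc.im : ℂ) * 2 := by
        linear_combination hB + (2*I) * hconj + (-2*(cc.im:ℂ)) * Complex.I_sq
      have hD' : de = (cc.re : ℂ) * (2 * I) + (cc.im : ℂ) * 2 := by
        linear_combination hD + (2*I) * hconj + (-2*(cc.im:ℂ)) * Complex.I_sq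
      have hG' : ga = (cc.re : ℂ) * 4 := by
        linear_combination hG + 2 * hconj + 2 * hccd
      have hZ' : ze = (cc.re : ℂ) * 6 := by
        linear_combination hZ + 3 * hconj + 3 * hccd
      refine ⟨cc.re, cc.im, ?_⟩
      funext i
      fin_cases i
      · show F 0 = (cc.re : ℂ) • X₁ 0 + (cc.im : ℂ) • X₂ 0
        rw [hF0, ← hcc0]
        simp only [X₁, X₂, Matrix.cons_val_zero, smul_eq_C_mul]
        conv_lhs => rw [hccd]
        rw [map_add, map_mul]
        ring
      · show F 1 = (cc.re : ℂ) • X₁ 1 + (cc.im : ℂ) • X₂ 1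
        rw [hF1, ← hal0, hA']
        simp only [X₁, X₂, Matrix.cons_val_one, Matrix.head_cons, Matrix.cons_val_zero,
          smul_eq_C_mul, map_add, map_mul, map_ofNat]
        ring
      · show F 2 = (cc.re : ℂ) • X₁ 2 + (cc.im : ℂ) • X₂ 2
        rw [hF2, ← hbe0, ← hga0, hB', hG']
        simp only [X₁, X₂, Matrix.cons_val_two, Matrix.tail_cons, Matrix.cons_val_zero,
          Matrix.cons_val_one, Matrix.head_cons, smul_eq_C_mul, map_add, map_mul, map_ofNat]
        ring
      · show F 3 = (cc.re : ℂ) • X₁ 3 + (cc.im : ℂ) • X₂ 3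
        rw [hF3, ← hde0, ← hep0, ← hze0, hD', hE, hZ']
        simp only [X₁, X₂, Matrix.cons_val_three, Matrix.tail_cons, Matrix.cons_val_zero,
          Matrix.cons_val_one, Matrix.cons_val_two, Matrix.head_cons, smul_eq_C_mul, map_add, map_mul, map_ofNat, map_zero, zero_mul,
          add_zero]
        ring
    · rintro ⟨a, b, rfl⟩
      refine ⟨crG' a b, ?_, ?_, ?_, ?_⟩ <;>
        simp only [Pi.add_apply, Pi.smul_apply, X₁, X₂, Matrix.cons_val_zero, Matrix.cons_val_one,
          Matrix.head_cons, Matrix.cons_val_two, Matrix.tail_cons, Matrix.cons_val_three]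
      · exact (hom_smul' _ _ (isWeightedHomogeneous_one ..)).add
          (hom_smul' _ _ (isWeightedHomogeneous_C ..))
      · exact (hom_smul' _ _ (hom_Cmul' _ _ homX0')).add (hom_smul' _ _ (hom_Cmul' _ _ homX0'))
      · exact (hom_smul' _ _ ((hom_Cmul' _ _ homX0sq').add (hom_Cmul' _ _ homX1'))).add
          (hom_smul' _ _ (hom_Cmul' _ _ homX0sq'))
      · exact (hom_smul' _ _ ((hom_Cmul' _ _ homX0cube').add (hom_Cmul' _ _ homX2'))).add
          (hom_smul' _ _ (hom_Cmul' _ _ homX0cube'))
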